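/- Rows of codewords lie in the eigencode: Let C ⊆ F_q^{mℓ} be a λ-QT code of index ℓ and co-index m whose eigenvalue set equals all of Ω, and let ℂ_Ω = ℂ(∩_{β∈Ω} V_β) be the eigencode of the common eigenspace of all eigenvalues. Let B ⊆ F_q^ℓ be the F_q-linear span of all rows c_k = (c_{k,0},…,c_{k,ℓ−1}), 0 ≤ k ≤ m−1, of all codewords c ∈ C viewed as m×ℓ arrays. Then B ⊆ ℂ_Ω. -/

import Mathlib

open Polynomial

open scoped Classical in
/-- Hamming weight: the number of nonzero coordinates. -/
noncomputable def wt {ι K : Type*} [Fintype ι] [Zero K] (c : ι → K) : ℕ :=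
  (Finset.univ.filter fun i => c i ≠ 0).card

/-- Minimum Hamming weight of a nonzero codeword of `S`, with `⊤` for the zero code. -/
noncomputable def minDist {ι K : Type*} [Fintype ι] [Zero K] (S : Set (ι → K)) : ℕ∞ :=
  sInf {n : ℕ∞ | ∃ c ∈ S, c ≠ 0 ∧ (wt c : ℕ∞) = n}

/-- The λ-constashift by ℓ positions on m×ℓ arrays: row 0 becomes λ times old last row. -/
def rho {Fq : Type*} [Field Fq] (m ℓ : ℕ) [NeZero m] (lam : Fq)
    (c : ZMod m × Fin ℓ → Fq) : ZMod m × Fin ℓ → Fq :=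
  fun p => (if p.1 = 0 then lam else 1) * c (p.1 - 1, p.2)

/-- Reduction of a vector of polynomials mod `X^m - λ`, written as an m×ℓ array. -/
noncomputable def arrOf {Fq : Type*} [Field Fq] (m ℓ : ℕ) [NeZero m] (lam : Fq)
    (v : Fin ℓ → Polynomial Fq) : ZMod m × Fin ℓ → Fq :=
  fun p => ((v p.2) %ₘ (Polynomial.X ^ m - Polynomial.C lam)).coeff (p.1).val

/-- The eigenspace of `β` for the polynomial matrix `G`: the null space of `G(β)`. -/
def Vspace {Fq F : Type*} [Field Fq] [Field F] [Algebra Fq F] (ℓ : ℕ)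
    (G : Matrix (Fin ℓ) (Fin ℓ) (Polynomial Fq)) (β : F) : Set (Fin ℓ → F) :=
  {v | (G.map fun p => Polynomial.aeval β p).mulVec v = 0}

/-- The eigencode of a set of vectors `V ⊆ F^ℓ`. -/
def eigencode {Fq F : Type*} [Field Fq] [Field F] [Algebra Fq F] (ℓ : ℕ)
    (V : Set (Fin ℓ → F)) : Set (Fin ℓ → Fq) :=
  {u | ∀ v ∈ V, ∑ j, v j * algebraMap Fq F (u j) = 0}



lemma coeff_sum_zmod {R : Type*} [Semiring R] (m : ℕ) [NeZero m] (f : ZMod m → R) (k : ZMod m) :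
    (∑ i : ZMod m, C (f i) * X ^ (i.val)).coeff k.val = f k := by
  rw [Polynomial.finset_sum_coeff]
  rw [Finset.sum_eq_single k]
  · simp [coeff_C_mul, coeff_X_pow]
  · intro i _ hik
    simp only [coeff_C_mul, coeff_X_pow]
    rw [if_neg, mul_zero]
    exact fun h => hik (ZMod.val_injective m h.symm)
  · simp

lemma degree_sum_zmod_lt {R : Type*} [Semiring R] (m : ℕ) [NeZero m] (f : ZMod m → R) :
    (∑ i : ZMod m, C (f i) * X ^ (i.val)).degree < ((m : ℕ) : WithBot ℕ) := by
  apply lt_of_le_of_lt (Polynomial.degree_sum_le _ _)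
  rw [Finset.sup_lt_iff (by exact_mod_cast WithBot.bot_lt_coe (m : ℕ))]
  intro i _
  apply lt_of_le_of_lt (Polynomial.degree_C_mul_X_pow_le _ _)
  exact_mod_cast ZMod.val_lt i

theorem rows_lie_in_eigencode'
    {Fq F : Type*} [Field Fq] [Fintype Fq] [Field F] [Algebra Fq F]
    (m ℓ : ℕ) [NeZero m] (hcop : Nat.Coprime m (Fintype.card Fq))
    (lam : Fq) (hlam : lam ≠ 0)
    (hsplit : IsSplittingField Fq F (X ^ m - C lam))
    (𝓒 : Submodule Fq (ZMod m × Fin ℓ → Fq))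
    (G : Matrix (Fin ℓ) (Fin ℓ) (Polynomial Fq))
    (hGen : ∀ v : Fin ℓ → Polynomial Fq,
      (fun p : ZMod m × Fin ℓ => ((v p.2) %ₘ (X ^ m - C lam)).coeff (p.1).val) ∈ 𝓒 ↔
        v ∈ Submodule.span (Polynomial Fq) (Set.range fun i j => G i j))
    (c : ZMod m × Fin ℓ → Fq) (hc : c ∈ 𝓒) (k : ZMod m)
    (w : Fin ℓ → F)
    (hw : ∀ β : F, β ^ m = algebraMap Fq F lam →
      (G.map fun p => Polynomial.aeval β p).mulVec w = 0) :
    ∑ j, w j * algebraMap Fq F (c (k, j)) = 0 := by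
  have hm0 : m ≠ 0 := NeZero.ne m
  -- (m : Fq) ≠ 0
  have hmF : (m : Fq) ≠ 0 := by
    intro h
    have hchar : ringChar Fq ∣ m := (ringChar.spec Fq m).mp h
    have hcard : ringChar Fq ∣ Fintype.card Fq := by
      have := FiniteField.cast_card_eq_zero Fq
      exact (ringChar.spec Fq _).mp this
    have h1 : ringChar Fq ∣ 1 := Nat.dvd_gcd hchar hcard |>.trans hcop.dvd
    have hp : (ringChar Fq).Prime := CharP.char_is_prime Fq (ringChar Fq)
    exact hp.ne_one (Nat.dvd_one.mp h1)
  -- the polynomial vector representing c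
  set v : Fin ℓ → Polynomial Fq := fun j => ∑ i : ZMod m, C (c (i, j)) * X ^ (i.val) with hv
  have hmonic : (X ^ m - C lam : Polynomial Fq).Monic := monic_X_pow_sub_C lam hm0
  have hdeg : (X ^ m - C lam : Polynomial Fq).degree = (m : ℕ) := degree_X_pow_sub_C (Nat.pos_of_ne_zero hm0) lam
  have harr : (fun p : ZMod m × Fin ℓ => ((v p.2) %ₘ (X ^ m - C lam)).coeff (p.1).val) = c := by
    funext p
    rw [Polynomial.modByMonic_eq_self_iff hmonic |>.mpr]
    · exact coeff_sum_zmod m (fun i => c (i, p.2)) p.1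
    · rw [hdeg]; exact degree_sum_zmod_lt m _
  have hvmem : v ∈ Submodule.span (Polynomial Fq) (Set.range fun i j => G i j) :=
    (hGen v).mp (by rw [harr]; exact hc)
  obtain ⟨p, hp⟩ := (Submodule.mem_span_range_iff_exists_fun (Polynomial Fq)).mp hvmem
  -- key: for every root β, ∑ j, w j * (aeval β (v j)) = 0
  have hkey : ∀ β : F, β ^ m = algebraMap Fq F lam →
      ∑ j, w j * (aeval β (v j)) = 0 := by
    intro β hβ
    have hvj : ∀ j, v j = ∑ i, p i * G i j := by
      intro j
      rw [← hp]
      simp [Finset.sum_apply, Pi.smul_apply, smul_eq_mul]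
    calc ∑ j, w j * (aeval β (v j))
        = ∑ j, ∑ i, aeval β (p i) * (aeval β (G i j) * w j) := by
          apply Finset.sum_congr rfl; intro j _
          rw [hvj j, map_sum, Finset.mul_sum]
          apply Finset.sum_congr rfl; intro i _
          rw [map_mul]; ring
      _ = ∑ i, aeval β (p i) * ∑ j, aeval β (G i j) * w j := by
          rw [Finset.sum_comm]
          simp [Finset.mul_sum]
      _ = 0 := by
          apply Finset.sum_eq_zero; intro i _
          have := congrFun (hw β hβ) i
          simp only [Matrix.mulVec, dotProduct, Matrix.map_apply, Pi.zero_apply] at this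
          rw [this, mul_zero]
  -- the polynomial P over F
  set s : ZMod m → F := fun i => ∑ j, w j * algebraMap Fq F (c (i, j)) with hs
  set P : Polynomial F := ∑ i : ZMod m, C (s i) * X ^ (i.val) with hP
  suffices hP0 : P = 0 by
    have := coeff_sum_zmod m s k
    rw [← hP, hP0] at this
    simpa using this.symm
  -- every root of X^m - lam is a root of P
  have hQ : ((X ^ m - C lam : Polynomial Fq).map (algebraMap Fq F)) =
      X ^ m - C (algebraMap Fq F lam) := by
    simp [Polynomial.map_sub, Polynomial.map_pow]
  have hPeval : ∀ β : F, β ^ m = algebraMap Fq F lam → P.eval β = 0 := by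
    intro β hβ
    have : P.eval β = ∑ j, w j * (aeval β (v j)) := by
      rw [hP, Polynomial.eval_finset_sum]
      simp only [eval_mul, eval_C, eval_pow, eval_X]
      simp only [hs, hv, map_sum, map_mul, aeval_C, map_pow, aeval_X,
        Finset.sum_mul, Finset.mul_sum]
      rw [Finset.sum_comm]
      apply Finset.sum_congr rfl; intro j _
      apply Finset.sum_congr rfl; intro i _
      ring
    rw [this, hkey β hβ]
  by_contra hP0
  -- roots of the mapped polynomial
  have hsep : ((X ^ m - C lam : Polynomial Fq).map (algebraMap Fq F)).Separable :=
    (separable_X_pow_sub_C lam hmF hlam).map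
  have hnodup := nodup_roots hsep
  have hcardroots : ((X ^ m - C lam : Polynomial Fq).map (algebraMap Fq F)).roots.card = m := by
    rw [← hsplit.splits'.natDegree_eq_card_roots, natDegree_map, natDegree_X_pow_sub_C]
  have hsub : ((X ^ m - C lam : Polynomial Fq).map (algebraMap Fq F)).roots ≤ P.roots := by
    rw [Multiset.le_iff_subset hnodup]
    intro β hβ
    rw [Polynomial.mem_roots (hmonic.map (algebraMap Fq F)).ne_zero, hQ] at hβ
    have hβ' : β ^ m = algebraMap Fq F lam := by
      have := hβ
      simp only [Polynomial.IsRoot, eval_sub, eval_pow, eval_X, eval_C, sub_eq_zero] at this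
      exact this
    rw [Polynomial.mem_roots hP0]
    exact hPeval β hβ'
  have h1 : (m : ℕ) ≤ P.roots.card := by
    rw [← hcardroots]; exact Multiset.card_le_card hsub
  have h2 : P.roots.card ≤ P.natDegree := Polynomial.card_roots' P
  have h3 : P.natDegree < m :=
    (Polynomial.natDegree_lt_iff_degree_lt hP0).mpr (degree_sum_zmod_lt m s)
  omega

theorem rows_lie_in_eigencode
    {Fq F : Type*} [Field Fq] [Fintype Fq] [Field F] [Algebra Fq F]
    (m ℓ : ℕ) [NeZero m] (hcop : Nat.Coprime m (Fintype.card Fq))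
    (lam : Fq) (hlam : lam ≠ 0)
    (hsplit : IsSplittingField Fq F (X ^ m - C lam))
    (𝓒 : Submodule Fq (ZMod m × Fin ℓ → Fq))
    (hQT : ∀ c ∈ 𝓒, rho m ℓ lam c ∈ 𝓒)
    (G : Matrix (Fin ℓ) (Fin ℓ) (Polynomial Fq))
    (htri : ∀ i j, j < i → G i j = 0)
    (hdiv : ∀ j, G j j ∣ X ^ m - C lam)
    (hGen : ∀ v : Fin ℓ → Polynomial Fq,
      arrOf m ℓ lam v ∈ 𝓒 ↔ v ∈ Submodule.span (Polynomial Fq) (Set.range fun i j => G i j))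
    (hall : ∀ x : F, x ^ m = algebraMap Fq F lam → Polynomial.aeval x G.det = 0)
    (VΩ : Set (Fin ℓ → F))
    (hVΩ : VΩ = ⋂ β ∈ {x : F | x ^ m = algebraMap Fq F lam}, Vspace ℓ G β)
    (B : Submodule Fq (Fin ℓ → Fq))
    (hB : B = Submodule.span Fq {u | ∃ c ∈ 𝓒, ∃ k : ZMod m, u = fun j => c (k, j)}) :
    (B : Set (Fin ℓ → Fq)) ⊆ eigencode ℓ VΩ := by
  rw [hB]
  have hE : ∀ u ∈ ({u | ∃ c ∈ 𝓒, ∃ k : ZMod m, u = fun j => c (k, j)} : Set (Fin ℓ → Fq)),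
      u ∈ eigencode ℓ VΩ := by
    rintro u ⟨c, hc, k, rfl⟩ w hwv
    refine rows_lie_in_eigencode' m ℓ hcop lam hlam hsplit 𝓒 G hGen c hc k w ?_
    intro β hβ
    subst hVΩ
    have := Set.mem_iInter₂.mp hwv β hβ
    exact this
  let E : Submodule Fq (Fin ℓ → Fq) :=
    { carrier := eigencode ℓ VΩ
      add_mem' := by
        intro a b ha hb w hw
        have ha' := ha w hw
        have hb' := hb w hw
        simp only [Pi.add_apply, map_add, mul_add, Finset.sum_add_distrib, ha', hb', add_zero]
      zero_mem' := by intro w hw; simp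
      smul_mem' := by
        intro r a ha w hw
        have ha' := ha w hw
        simp only [Pi.smul_apply, smul_eq_mul, map_mul]
        calc ∑ x, w x * (algebraMap Fq F r * algebraMap Fq F (a x))
            = algebraMap Fq F r * ∑ x, w x * algebraMap Fq F (a x) := by
              rw [Finset.mul_sum]; apply Finset.sum_congr rfl; intros; ring
          _ = 0 := by rw [ha', mul_zero] }
  have hle : Submodule.span Fq {u | ∃ c ∈ 𝓒, ∃ k : ZMod m, u = fun j => c (k, j)} ≤ E :=
    Submodule.span_le.mpr hE
  exact fun x hx => hle hx
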